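/- General solution of the functional-differential equation: let α : (−π,π) → ℝ be odd, differentiable, with values in (−π/2, π/2) and α′(θ) ≠ 0 for all θ, and set h(θ) = −α′(θ)·(1 + i·tan(α(θ))). Then h(−θ) = conj(h(θ)), h(−θ)/h(θ) = e^{−2iα(θ)}, and h satisfies d/dθ [Log(h(−θ)/h(θ))] = i(h(θ) + h(−θ)) for all θ ∈ (−π,π), i.e. −2iα′(θ) = i(h(θ) + h(−θ)). -/

import Mathlib

/-- General solution of the functional-differential equation: for `α` odd,
differentiable on `(−π,π)` with values in `(−π/2,π/2)` and `α′ ≠ 0`, the function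
`h(θ) = −α′(θ)(1 + i tan α(θ))` satisfies `h(−θ) = conj h(θ)`,
`h(−θ)/h(θ) = e^{−2iα(θ)}`, and `d/dθ Log(h(−θ)/h(θ)) = i(h(θ) + h(−θ))`,
i.e. `−2iα′(θ) = i(h(θ) + h(−θ))`. -/
theorem functional_eq_general_solution (α : ℝ → ℝ) (h : ℝ → ℂ)
    (hadiff : ∀ θ ∈ Set.Ioo (-Real.pi) Real.pi, DifferentiableAt ℝ α θ)
    (haodd : ∀ θ ∈ Set.Ioo (-Real.pi) Real.pi, α (-θ) = -α θ)
    (haran : ∀ θ ∈ Set.Ioo (-Real.pi) Real.pi,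
      α θ ∈ Set.Ioo (-(Real.pi / 2)) (Real.pi / 2))
    (hane : ∀ θ ∈ Set.Ioo (-Real.pi) Real.pi, deriv α θ ≠ 0)
    (hh : ∀ θ : ℝ, h θ =
      -((deriv α θ : ℝ) : ℂ) * (1 + Complex.I * (Real.tan (α θ) : ℂ))) :
    (∀ θ ∈ Set.Ioo (-Real.pi) Real.pi, h (-θ) = starRingEnd ℂ (h θ)) ∧
    (∀ θ ∈ Set.Ioo (-Real.pi) Real.pi,
      h (-θ) / h θ = Complex.exp (-2 * Complex.I * (α θ : ℂ))) ∧
    (∀ θ ∈ Set.Ioo (-Real.pi) Real.pi,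
      deriv (fun φ : ℝ => Complex.log (h (-φ) / h φ)) θ = Complex.I * (h θ + h (-θ))) ∧
    (∀ θ ∈ Set.Ioo (-Real.pi) Real.pi,
      -2 * Complex.I * ((deriv α θ : ℝ) : ℂ) = Complex.I * (h θ + h (-θ))) := by
  have hopen : IsOpen (Set.Ioo (-Real.pi) Real.pi) := isOpen_Ioo
  -- derivative is even
  have hodd_nhds : ∀ θ ∈ Set.Ioo (-Real.pi) Real.pi,
      (fun φ => α (-φ)) =ᶠ[nhds θ] (fun φ => -α φ) := by
    intro θ hθ
    filter_upwards [hopen.mem_nhds hθ] with φ hφ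
    exact haodd φ hφ
  have hderiv_even : ∀ θ ∈ Set.Ioo (-Real.pi) Real.pi, deriv α (-θ) = deriv α θ := by
    intro θ hθ
    have h1 : deriv (fun φ => α (-φ)) θ = -deriv α (-θ) := deriv_comp_neg α θ
    have h2 : deriv (fun φ => -α φ) θ = -deriv α θ := deriv.neg
    have h3 := (hodd_nhds θ hθ).deriv_eq
    rw [h1, h2] at h3
    linarith
  -- conjugation formula
  have hconj : ∀ θ ∈ Set.Ioo (-Real.pi) Real.pi, h (-θ) = starRingEnd ℂ (h θ) := by
    intro θ hθ
    rw [hh (-θ), hh θ, haodd θ hθ, hderiv_even θ hθ, Real.tan_neg]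
    simp only [map_mul, map_add, map_one, map_neg, Complex.conj_ofReal, Complex.conj_I]
    push_cast
    ring
  -- cos ≠ 0
  have hcos : ∀ θ ∈ Set.Ioo (-Real.pi) Real.pi, Real.cos (α θ) ≠ 0 := by
    intro θ hθ
    have := haran θ hθ
    exact ne_of_gt (Real.cos_pos_of_mem_Ioo ⟨this.1, this.2⟩)
  -- exponential form of h
  have hform : ∀ θ ∈ Set.Ioo (-Real.pi) Real.pi,
      h θ = -((deriv α θ : ℝ) : ℂ) / ((Real.cos (α θ) : ℝ) : ℂ)
        * Complex.exp ((α θ : ℂ) * Complex.I) := by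
    intro θ hθ
    have hc : Complex.cos ((α θ : ℝ) : ℂ) ≠ 0 := by
      rw [← Complex.ofReal_cos]
      exact Complex.ofReal_ne_zero.mpr (hcos θ hθ)
    rw [hh θ, Complex.exp_mul_I, Complex.ofReal_tan, Complex.tan_eq_sin_div_cos,
      Complex.ofReal_cos]
    field_simp
  -- ratio formula
  have hratio : ∀ θ ∈ Set.Ioo (-Real.pi) Real.pi,
      h (-θ) / h θ = Complex.exp (-2 * Complex.I * (α θ : ℂ)) := by
    intro θ hθ
    have hmem : -θ ∈ Set.Ioo (-Real.pi) Real.pi := ⟨by linarith [hθ.2], by linarith [hθ.1]⟩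
    have h1 := hform θ hθ
    have h2 := hform (-θ) hmem
    rw [haodd θ hθ, hderiv_even θ hθ] at h2
    have hane' := hane θ hθ
    have hcne : ((Real.cos (α θ) : ℝ) : ℂ) ≠ 0 := Complex.ofReal_ne_zero.mpr (hcos θ hθ)
    have hdne : ((deriv α θ : ℝ) : ℂ) ≠ 0 := Complex.ofReal_ne_zero.mpr hane'
    rw [Real.cos_neg] at h2
    have hcne2 : -((deriv α θ : ℝ) : ℂ) / ((Real.cos (α θ) : ℝ) : ℂ) ≠ 0 :=
      div_ne_zero (neg_ne_zero.mpr hdne) hcne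
    rw [h1, h2, mul_div_mul_left _ _ hcne2, ← Complex.exp_sub]
    congr 1
    push_cast
    ring
  -- Log equals -2 i α on the interval
  have hlog : ∀ θ ∈ Set.Ioo (-Real.pi) Real.pi,
      Complex.log (h (-θ) / h θ) = -2 * Complex.I * (α θ : ℂ) := by
    intro θ hθ
    rw [hratio θ hθ, Complex.log_exp]
    · have := haran θ hθ
      simp [Complex.mul_im, Complex.mul_re]
      linarith [this.2]
    · have := haran θ hθ
      simp [Complex.mul_im, Complex.mul_re]
      linarith [this.1]
  -- sum formula
  have hsum : ∀ θ ∈ Set.Ioo (-Real.pi) Real.pi,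
      -2 * Complex.I * ((deriv α θ : ℝ) : ℂ) = Complex.I * (h θ + h (-θ)) := by
    intro θ hθ
    have hmem : -θ ∈ Set.Ioo (-Real.pi) Real.pi := ⟨by linarith [hθ.2], by linarith [hθ.1]⟩
    rw [hh θ, hh (-θ), haodd θ hθ, hderiv_even θ hθ, Real.tan_neg]
    push_cast
    ring
  refine ⟨hconj, hratio, ?_, hsum⟩
  intro θ hθ
  have hev : (fun φ : ℝ => Complex.log (h (-φ) / h φ)) =ᶠ[nhds θ]
      (fun φ : ℝ => -2 * Complex.I * (α φ : ℂ)) := by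
    filter_upwards [hopen.mem_nhds hθ] with φ hφ
    exact hlog φ hφ
  rw [hev.deriv_eq]
  have hd : HasDerivAt (fun φ : ℝ => -2 * Complex.I * (α φ : ℂ))
      (-2 * Complex.I * ((deriv α θ : ℝ) : ℂ)) θ := by
    have := ((hadiff θ hθ).hasDerivAt.ofReal_comp).const_mul (-2 * Complex.I)
    simpa using this
  rw [hd.deriv]
  exact hsum θ hθ
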